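/- Assume the Berezanskii conditions. Let r_{-1}, r_0 ∈ ℂ with (r_0, r_{-1}) ≠ (0,0), and define functions r_n : ℂ → ℂ for n ≥ 1 by the recurrence z·r_n(z) = b_n r_{n+1}(z) + a_n r_n(z) + b_{n-1} r_{n-1}(z) for n ≥ 0, where r_{-1} and r_0 denote the constant functions with the given values. Then for every z ∈ ℂ there exists a constant K_z > 0 such that for all n ≥ 0: max(|r_n(z)|, |r_{n+1}(z)|) ≥ K_z/√(b_{n+1}). -/

import Mathlib

private lemma berez_prod_iter (W M : ℕ → ℝ) (hM : ∀ k, 0 ≤ M k)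
    (hstep : ∀ k, W k ≤ M k * W (k+1)) (n1 : ℕ) :
    ∀ N, n1 ≤ N → W n1 ≤ (∏ k ∈ Finset.Ico n1 N, M k) * W N := by
  intro N hN
  induction N, hN using Nat.le_induction with
  | base => simp
  | succ N hN ih =>
      calc W n1 ≤ (∏ k ∈ Finset.Ico n1 N, M k) * W N := ih
        _ ≤ (∏ k ∈ Finset.Ico n1 N, M k) * (M N * W (N+1)) := by
            exact mul_le_mul_of_nonneg_left (hstep N)
              (Finset.prod_nonneg (fun i _ => hM i))
        _ = (∏ k ∈ Finset.Ico n1 (N+1), M k) * W (N+1) := by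
            rw [Finset.prod_Ico_succ_top hN]; ring

private lemma exists_pos_lb (f : ℕ → ℝ) (hf : ∀ n, 0 < f n) (M : ℕ) :
    ∃ K : ℝ, 0 < K ∧ ∀ n, n ≤ M → K ≤ f n := by
  induction M with
  | zero => exact ⟨f 0, hf 0, fun n hn => by rw [Nat.le_zero.mp hn]⟩
  | succ M ih =>
      obtain ⟨K, hK, hKle⟩ := ih
      refine ⟨min K (f (M+1)), lt_min hK (hf _), fun n hn => ?_⟩
      rcases Nat.lt_succ_iff_lt_or_eq.mp (Nat.lt_succ_of_le hn) with h | h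
      · exact le_trans (min_le_left _ _) (hKle n (Nat.lt_succ_iff.mp h))
      · rw [h]; exact min_le_right _ _

private lemma berez_prod_le_exp (s : ℕ → ℝ) (hs : ∀ k, 0 ≤ s k) (F : Finset ℕ) :
    ∏ k ∈ F, (1 + s k) ≤ Real.exp (∑ k ∈ F, s k) := by
  rw [Real.exp_sum]
  apply Finset.prod_le_prod
  · intro i _; linarith [hs i]
  · intro i _; linarith [Real.add_one_le_exp (s i)]

private lemma berez_prod_m (b : ℕ → ℝ) (hb : ∀ n, 0 < b n) (n1 : ℕ) :
    ∀ N, n1 ≤ N → (∏ k ∈ Finset.Ico n1 N, Real.sqrt (b k * b (k+2)) / b (k+1)) *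
      (Real.sqrt (b (n1+1)) * Real.sqrt (b N)) = Real.sqrt (b n1) * Real.sqrt (b (N+1)) := by
  intro N hN
  induction N, hN using Nat.le_induction with
  | base => simp [mul_comm]
  | succ N hN ih =>
      have hc : Real.sqrt (b N) * b (N+1) ≠ 0 := ne_of_gt (mul_pos (Real.sqrt_pos.2 (hb N)) (hb (N+1)))
      apply mul_right_cancel₀ hc
      rw [Finset.prod_Ico_succ_top hN]
      set Q := ∏ k ∈ Finset.Ico n1 N, Real.sqrt (b k * b (k+2)) / b (k+1) with hQ
      have hmN : (Real.sqrt (b N * b (N+2)) / b (N+1)) * b (N+1) =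
          Real.sqrt (b N) * Real.sqrt (b (N+2)) := by
        rw [div_mul_cancel₀ _ (ne_of_gt (hb (N+1))), Real.sqrt_mul (hb N).le]
      have hsq1 : Real.sqrt (b (N+1)) * Real.sqrt (b (N+1)) = b (N+1) :=
        Real.mul_self_sqrt (hb (N+1)).le
      calc (Q * (Real.sqrt (b N * b (N+2)) / b (N+1))) *
            (Real.sqrt (b (n1+1)) * Real.sqrt (b (N+1))) * (Real.sqrt (b N) * b (N+1))
          = (Q * (Real.sqrt (b (n1+1)) * Real.sqrt (b N))) *
            ((Real.sqrt (b N * b (N+2)) / b (N+1)) * b (N+1)) * Real.sqrt (b (N+1)) := by ring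
        _ = (Real.sqrt (b n1) * Real.sqrt (b (N+1))) *
            (Real.sqrt (b N) * Real.sqrt (b (N+2))) * Real.sqrt (b (N+1)) := by rw [ih, hmN]
        _ = Real.sqrt (b n1) * Real.sqrt (b (N+2)) *
            (Real.sqrt (b N) * (Real.sqrt (b (N+1)) * Real.sqrt (b (N+1)))) := by ring
        _ = Real.sqrt (b n1) * Real.sqrt (b (N+1+1)) * (Real.sqrt (b N) * b (N+1)) := by
            rw [hsq1]


private lemma berez_step (a b : ℕ → ℝ) (hb : ∀ n, 0 < b n) (z : ℂ) (r : ℕ → ℂ → ℂ)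
    (hrrec : ∀ (n : ℕ), z * r (n+1) z =
      (b (n+1) : ℂ) * r (n+2) z + (a (n+1) : ℂ) * r (n+1) z + (b n : ℂ) * r n z)
    (k : ℕ) :
    max (Real.sqrt (b (k+1)) * ‖r (k+2) z‖) (Real.sqrt (b k) * ‖r (k+1) z‖) ≤
      max 1 (Real.sqrt (b k * b (k+2)) / b (k+1)) *
        (1 + (‖z‖ + |a (k+2)|) / Real.sqrt (b (k+1) * b (k+2))) *
        max (Real.sqrt (b (k+2)) * ‖r (k+3) z‖)
            (Real.sqrt (b (k+1)) * ‖r (k+2) z‖) := by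
  have hbk := hb k; have hbk1 := hb (k+1); have hbk2 := hb (k+2)
  set x1 := ‖r (k+1) z‖ with hx1d
  set x2 := ‖r (k+2) z‖ with hx2d
  set x3 := ‖r (k+3) z‖ with hx3d
  have hx1 : 0 ≤ x1 := norm_nonneg _
  have hx2 : 0 ≤ x2 := norm_nonneg _
  have hx3 : 0 ≤ x3 := norm_nonneg _
  set S := (‖z‖ + |a (k+2)|) / Real.sqrt (b (k+1) * b (k+2)) with hSd
  set W' := max (Real.sqrt (b (k+2)) * x3) (Real.sqrt (b (k+1)) * x2) with hW'd
  have hS0 : 0 ≤ S := by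
    rw [hSd]
    apply div_nonneg (by positivity) (Real.sqrt_nonneg _)
  have hW0 : 0 ≤ W' := le_trans (by positivity) (le_max_right _ _)
  have hcoef1 : (1:ℝ) ≤ max 1 (Real.sqrt (b k * b (k+2)) / b (k+1)) * (1 + S) := by
    have h1 : (1:ℝ) ≤ max 1 (Real.sqrt (b k * b (k+2)) / b (k+1)) := le_max_left _ _
    nlinarith
  -- key abs inequality
  have habs : b (k+1) * x1 ≤ (‖z‖ + |a (k+2)|) * x2 + b (k+2) * x3 := by
    have heq : (b (k+1) : ℂ) * r (k+1) z =
        (z - (a (k+2):ℂ)) * r (k+2) z - (b (k+2):ℂ) * r (k+3) z := by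
      linear_combination -hrrec (k+1)
    have h1 : b (k+1) * x1 = ‖(b (k+1) : ℂ) * r (k+1) z‖ := by
      rw [norm_mul, Complex.norm_real, Real.norm_eq_abs, abs_of_pos hbk1, hx1d]
    rw [h1, heq]
    calc ‖(z - (a (k+2):ℂ)) * r (k+2) z - (b (k+2):ℂ) * r (k+3) z‖
        ≤ ‖(z - (a (k+2):ℂ)) * r (k+2) z‖ +
          ‖(b (k+2):ℂ) * r (k+3) z‖ := norm_sub_le _ _
      _ ≤ (‖z‖ + |a (k+2)|) * x2 + b (k+2) * x3 := by
          rw [norm_mul, norm_mul, Complex.norm_real, Real.norm_eq_abs, abs_of_pos hbk2]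
          have h2 : ‖z - (a (k+2):ℂ)‖ ≤ ‖z‖ + |a (k+2)| := by
            calc ‖z - (a (k+2):ℂ)‖
                ≤ ‖z‖ + ‖(a (k+2):ℂ)‖ := norm_sub_le _ _
              _ = ‖z‖ + |a (k+2)| := by rw [Complex.norm_real, Real.norm_eq_abs]
          gcongr
  have hsk1 : Real.sqrt (b (k+1)) ≠ 0 := ne_of_gt (Real.sqrt_pos.2 hbk1)
  have hsk2 : Real.sqrt (b (k+2)) ≠ 0 := ne_of_gt (Real.sqrt_pos.2 hbk2)
  -- coefficient identities
  have e1 : (‖z‖ + |a (k+2)|) * Real.sqrt (b k) =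
      S * Real.sqrt (b k * b (k+2)) * Real.sqrt (b (k+1)) := by
    rw [hSd, Real.sqrt_mul hbk1.le, Real.sqrt_mul hbk.le]
    field_simp
  have e2 : Real.sqrt (b k) * b (k+2) = Real.sqrt (b k * b (k+2)) * Real.sqrt (b (k+2)) := by
    rw [Real.sqrt_mul hbk.le, mul_assoc, Real.mul_self_sqrt hbk2.le]
  have key : Real.sqrt (b k) * x1 * b (k+1) ≤ Real.sqrt (b k * b (k+2)) * (1 + S) * W' := by
    calc Real.sqrt (b k) * x1 * b (k+1) = Real.sqrt (b k) * (b (k+1) * x1) := by ring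
      _ ≤ Real.sqrt (b k) * ((‖z‖ + |a (k+2)|) * x2 + b (k+2) * x3) :=
          mul_le_mul_of_nonneg_left habs (Real.sqrt_nonneg _)
      _ = (‖z‖ + |a (k+2)|) * Real.sqrt (b k) * x2 +
          (Real.sqrt (b k) * b (k+2)) * x3 := by ring
      _ = S * Real.sqrt (b k * b (k+2)) * (Real.sqrt (b (k+1)) * x2) +
          Real.sqrt (b k * b (k+2)) * (Real.sqrt (b (k+2)) * x3) := by rw [e1, e2]; ring
      _ ≤ S * Real.sqrt (b k * b (k+2)) * W' + Real.sqrt (b k * b (k+2)) * W' := by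
          gcongr
          · exact le_max_right _ _
          · exact le_max_left _ _
      _ = Real.sqrt (b k * b (k+2)) * (1 + S) * W' := by ring
  apply max_le
  · calc Real.sqrt (b (k+1)) * x2 ≤ W' := le_max_right _ _
      _ = 1 * W' := (one_mul _).symm
      _ ≤ max 1 (Real.sqrt (b k * b (k+2)) / b (k+1)) * (1 + S) * W' :=
          mul_le_mul_of_nonneg_right hcoef1 hW0
  · have h2 : Real.sqrt (b k) * x1 ≤
        (Real.sqrt (b k * b (k+2)) / b (k+1)) * (1 + S) * W' := by
      have h3 : (Real.sqrt (b k * b (k+2)) / b (k+1)) * (1 + S) * W' =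
          (Real.sqrt (b k * b (k+2)) * (1 + S) * W') / b (k+1) := by ring
      rw [h3, le_div_iff₀ hbk1]
      exact key
    calc Real.sqrt (b k) * x1 ≤ (Real.sqrt (b k * b (k+2)) / b (k+1)) * (1 + S) * W' := h2
      _ ≤ max 1 (Real.sqrt (b k * b (k+2)) / b (k+1)) * (1 + S) * W' := by
          apply mul_le_mul_of_nonneg_right _ hW0
          apply mul_le_mul_of_nonneg_right (le_max_right _ _) (by linarith)


/-- Berezanskii's theorem (lower bound part): under the Berezanskii conditions, any
non-trivial solution `(r_n)` of the three-term recurrence satisfies, for each `z`,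
`max(|r_n(z)|, |r_{n+1}(z)|) ≥ K_z/√(b_{n+1})` for all `n ≥ 0`, where `K_z > 0`. -/
theorem stmt_2 (a b : ℕ → ℝ) (hb : ∀ n, 0 < b n)
    (r0 rm1 : ℂ) (hne : ¬(r0 = 0 ∧ rm1 = 0))
    (r : ℕ → ℂ → ℂ) (hr0 : ∀ z : ℂ, r 0 z = r0)
    (hrrec0 : ∀ z : ℂ, z * r 0 z = (b 0 : ℂ) * r 1 z + (a 0 : ℂ) * r 0 z + rm1)
    (hrrec : ∀ (n : ℕ) (z : ℂ), z * r (n+1) z =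
      (b (n+1) : ℂ) * r (n+2) z + (a (n+1) : ℂ) * r (n+1) z + (b n : ℂ) * r n z)
    (hBer : Summable (fun n : ℕ => (1 + |a (n+1)|) / Real.sqrt (b (n+1) * b n)))
    (hreg : (∃ n0, ∀ n ≥ n0, (b (n+1)) ^ 2 ≤ b n * b (n+2)) ∨
            (∃ n0, ∀ n ≥ n0, b n * b (n+2) ≤ (b (n+1)) ^ 2))
    :
    ∀ z : ℂ, ∃ K : ℝ, 0 < K ∧ ∀ n : ℕ,
      K / Real.sqrt (b (n + 1)) ≤ max (‖r n z‖) (‖r (n + 1) z‖) := by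
  intro z
  -- abbreviations (as plain functions via `set`)
  -- no two consecutive zeros
  have hdown : ∀ n, r (n+1) z = 0 → r (n+2) z = 0 → r n z = 0 := by
    intro n h1 h2
    have h := hrrec n z
    rw [h1, h2] at h
    simp only [mul_zero, zero_add, add_zero] at h
    have hbn : (b n : ℂ) ≠ 0 := by
      exact_mod_cast (hb n).ne'
    rcases mul_eq_zero.mp h.symm with h | h
    · exact absurd h hbn
    · exact h
  have hpair : ∀ n, r n z = 0 → r (n+1) z = 0 → False := by
    intro n
    induction n with
    | zero =>
        intro h0 h1
        apply hne
        constructor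
        · rw [← hr0 z]; exact h0
        · have h := hrrec0 z
          rw [h0, h1] at h
          simpa using h.symm
    | succ n ih => intro h1 h2; exact ih (hdown n h1 h2) h1
  have hmaxpos : ∀ n, 0 < max (‖r n z‖) (‖r (n+1) z‖) := by
    intro n
    by_contra hcon
    rw [not_lt] at hcon
    have h1 : r n z = 0 :=
      norm_eq_zero.mp
        (le_antisymm (le_trans (le_max_left _ _) hcon) (norm_nonneg _))
    have h2 : r (n+1) z = 0 :=
      norm_eq_zero.mp
        (le_antisymm (le_trans (le_max_right _ _) hcon) (norm_nonneg _))
    exact hpair n h1 h2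
  -- W
  have hWpos : ∀ k, 0 < max (Real.sqrt (b (k+1)) * ‖r (k+2) z‖)
      (Real.sqrt (b k) * ‖r (k+1) z‖) := by
    intro k
    rcases lt_max_iff.mp (hmaxpos (k+1)) with h | h
    · exact lt_max_of_lt_right (mul_pos (Real.sqrt_pos.2 (hb k)) h)
    · exact lt_max_of_lt_left (mul_pos (Real.sqrt_pos.2 (hb (k+1))) h)
  -- divergence of b n * b (n+1)
  have hdiv : ∀ C : ℝ, ∃ M : ℕ, ∀ n, M ≤ n → C ≤ b n * b (n+1) := by
    intro C
    rcases le_or_gt C 0 with hC | hC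
    · exact ⟨0, fun n _ => le_trans hC (mul_pos (hb n) (hb (n+1))).le⟩
    · have h0 : (0:ℝ) < 1 / Real.sqrt C := by positivity
      have hev := hBer.tendsto_atTop_zero.eventually_lt_const h0
      rw [Filter.eventually_atTop] at hev
      obtain ⟨M, hM⟩ := hev
      refine ⟨M, fun n hn => ?_⟩
      have h1 := hM n hn
      have hden : (0:ℝ) < Real.sqrt (b (n+1) * b n) := Real.sqrt_pos.2 (mul_pos (hb (n+1)) (hb n))
      have h2 : 1 / Real.sqrt (b (n+1) * b n) < 1 / Real.sqrt C := by
        refine lt_of_le_of_lt ?_ h1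
        gcongr
        linarith [abs_nonneg (a (n+1))]
      have h3 : Real.sqrt C < Real.sqrt (b (n+1) * b n) :=
        lt_of_one_div_lt_one_div hden h2
      have h4 : C ≤ b (n+1) * b n := by
        nlinarith [Real.sq_sqrt hC.le, Real.sq_sqrt (mul_pos (hb (n+1)) (hb n)).le,
          Real.sqrt_nonneg C]
      linarith [h4, mul_comm (b (n+1)) (b n)]
  -- eventual monotonicity and case structure
  obtain ⟨n1, hmon, hcase⟩ :
      ∃ n1 : ℕ, (∀ n, n1 ≤ n → b n ≤ b (n+1)) ∧
        ((∀ k, n1 ≤ k → Real.sqrt (b k * b (k+2)) ≤ b (k+1)) ∨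
         (∀ k, n1 ≤ k → b (k+1) ≤ Real.sqrt (b k * b (k+2)))) := by
    rcases hreg with ⟨n0, hcv⟩ | ⟨n0, hcc⟩
    · -- convex case : b(n+1)^2 ≤ b n * b (n+2)
      by_cases hex : ∃ m0, n0 ≤ m0 ∧ b m0 ≤ b (m0+1)
      · obtain ⟨m0, hm0, hbm0⟩ := hex
        have hmono : ∀ n, m0 ≤ n → b n ≤ b (n+1) := by
          intro n hn
          induction n, hn using Nat.le_induction with
          | base => exact hbm0
          | succ n hn ih =>
              have h1 := hcv n (le_trans hm0 hn)
              nlinarith [hb n, hb (n+1), hb (n+2)]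
        refine ⟨m0, hmono, Or.inr ?_⟩
        intro k hk
        have h1 := hcv k (le_trans hm0 hk)
        calc b (k+1) = Real.sqrt ((b (k+1))^2) := (Real.sqrt_sq (hb (k+1)).le).symm
          _ ≤ Real.sqrt (b k * b (k+2)) := Real.sqrt_le_sqrt h1
      · push_neg at hex
        exfalso
        have hdec : ∀ n, n0 ≤ n → b n ≤ b n0 := by
          intro n hn
          induction n, hn using Nat.le_induction with
          | base => exact le_rfl
          | succ n hn ih => exact le_trans (hex n hn).le ih
        obtain ⟨M, hM⟩ := hdiv (b n0 * b n0 + 1)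
        have hn' := hM (max M n0) (le_max_left _ _)
        have h1 : b (max M n0) ≤ b n0 := hdec _ (le_max_right _ _)
        have h2 : b (max M n0 + 1) ≤ b n0 := hdec _ (by omega)
        nlinarith [hb (max M n0), hb (max M n0 + 1), hb n0]
    · -- concave case : b n * b (n+2) ≤ b (n+1)^2
      have hmono : ∀ n, n0 ≤ n → b n ≤ b (n+1) := by
        by_contra hC
        push_neg at hC
        obtain ⟨m0, hm0, hlt⟩ := hC
        have hdec : ∀ n, m0 ≤ n → b (n+1) ≤ b n := by
          intro n hn
          induction n, hn using Nat.le_induction with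
          | base => exact hlt.le
          | succ n hn ih =>
              have h1 := hcc n (le_trans hm0 hn)
              nlinarith [hb n, hb (n+1), hb (n+2)]
        have hdec2 : ∀ n, m0 ≤ n → b n ≤ b m0 := by
          intro n hn
          induction n, hn using Nat.le_induction with
          | base => exact le_rfl
          | succ n hn ih => exact le_trans (hdec n hn) ih
        obtain ⟨M, hM⟩ := hdiv (b m0 * b m0 + 1)
        have hn' := hM (max M m0) (le_max_left _ _)
        have h1 : b (max M m0) ≤ b m0 := hdec2 _ (le_max_right _ _)
        have h2 : b (max M m0 + 1) ≤ b m0 := hdec2 _ (by omega)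
        nlinarith [hb (max M m0), hb (max M m0 + 1), hb m0]
      refine ⟨n0, hmono, Or.inl ?_⟩
      intro k hk
      calc Real.sqrt (b k * b (k+2)) ≤ Real.sqrt ((b (k+1))^2) := Real.sqrt_le_sqrt (hcc k hk)
        _ = b (k+1) := Real.sqrt_sq (hb (k+1)).le
  -- abbreviations
  set Wf : ℕ → ℝ := fun k => max (Real.sqrt (b (k+1)) * ‖r (k+2) z‖)
    (Real.sqrt (b k) * ‖r (k+1) z‖) with hWfd
  set sf : ℕ → ℝ := fun k => (‖z‖ + |a (k+2)|) / Real.sqrt (b (k+1) * b (k+2)) with hsfd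
  set mf : ℕ → ℝ := fun k => Real.sqrt (b k * b (k+2)) / b (k+1) with hmfd
  have hWfpos : ∀ k, 0 < Wf k := by
    intro k
    rw [hWfd]
    exact hWpos k
  have hsnn : ∀ k, 0 ≤ sf k := by
    intro k
    rw [hsfd]
    exact div_nonneg (add_nonneg (norm_nonneg z) (abs_nonneg _)) (Real.sqrt_nonneg _)
  have hstep : ∀ k, Wf k ≤ max 1 (mf k) * (1 + sf k) * Wf (k+1) := by
    intro k
    simp only [hWfd, hsfd, hmfd]
    exact berez_step a b hb z r (fun n => hrrec n z) k
  have hMnn : ∀ k, 0 ≤ max 1 (mf k) * (1 + sf k) :=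
    fun k => mul_nonneg (le_trans zero_le_one (le_max_left _ _)) (by linarith [hsnn k])
  set Cz := max (‖z‖) 1 with hCzd
  have hCz1 : ‖z‖ ≤ Cz := by rw [hCzd]; exact le_max_left _ _
  have hCz2 : (1:ℝ) ≤ Cz := by rw [hCzd]; exact le_max_right _ _
  have hCzpos : (0:ℝ) < Cz := lt_of_lt_of_le one_pos hCz2
  set P := Real.exp (Cz * ∑' n, (1 + |a (n+1)|) / Real.sqrt (b (n+1) * b n)) with hPd
  have hPpos : 0 < P := Real.exp_pos _
  have hprodS : ∀ m N : ℕ, (∏ k ∈ Finset.Ico m N, (1 + sf k)) ≤ P := by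
    intro m N
    refine le_trans (berez_prod_le_exp sf hsnn _) ?_
    rw [hPd]
    apply Real.exp_le_exp.2
    have h1 : ∀ k : ℕ, sf k ≤ Cz * ((1 + |a (k+1+1)|) / Real.sqrt (b (k+1+1) * b (k+1))) := by
      intro k
      rw [hsfd]
      simp only []
      rw [mul_comm (b (k+1)) (b (k+2)), ← mul_div_assoc]
      gcongr
      nlinarith [abs_nonneg (a (k+2))]
    calc ∑ k ∈ Finset.Ico m N, sf k
        ≤ ∑ k ∈ Finset.Ico m N, Cz * ((1 + |a (k+1+1)|) / Real.sqrt (b (k+1+1) * b (k+1))) :=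
          Finset.sum_le_sum (fun i _ => h1 i)
      _ = Cz * ∑ k ∈ Finset.Ico m N, (1 + |a (k+1+1)|) / Real.sqrt (b (k+1+1) * b (k+1)) := by
          rw [Finset.mul_sum]
      _ ≤ Cz * ∑' n, (1 + |a (n+1)|) / Real.sqrt (b (n+1) * b n) := by
          apply mul_le_mul_of_nonneg_left _ hCzpos.le
          have h2 := Summable.sum_le_tsum
            ((Finset.Ico m N).map ⟨fun k => k+1, by intro x y h; simp only [] at h; omega⟩)
            (fun i _ => div_nonneg (by positivity) (Real.sqrt_nonneg _)) hBer
          rw [Finset.sum_map] at h2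
          exact h2
  -- the uniform lower bound for large indices
  obtain ⟨κ, hκpos, hκ⟩ :
      ∃ κ : ℝ, 0 < κ ∧ ∀ k, n1 ≤ k →
        κ ≤ Real.sqrt (b (k+2)) * max (‖r (k+1) z‖) (‖r (k+2) z‖) := by
    have hWle : ∀ k, n1 ≤ k → Wf k ≤
        Real.sqrt (b (k+2)) * max (‖r (k+1) z‖) (‖r (k+2) z‖) := by
      intro k hk
      have hb1 : Real.sqrt (b (k+1)) ≤ Real.sqrt (b (k+2)) :=
        Real.sqrt_le_sqrt (hmon (k+1) (by omega))
      have hb0 : Real.sqrt (b k) ≤ Real.sqrt (b (k+2)) :=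
        le_trans (Real.sqrt_le_sqrt (hmon k hk)) hb1
      rw [hWfd]
      apply max_le
      · calc Real.sqrt (b (k+1)) * ‖r (k+2) z‖
            ≤ Real.sqrt (b (k+2)) * ‖r (k+2) z‖ :=
              mul_le_mul_of_nonneg_right hb1 (norm_nonneg _)
          _ ≤ Real.sqrt (b (k+2)) * max (‖r (k+1) z‖) (‖r (k+2) z‖) :=
              mul_le_mul_of_nonneg_left (le_max_right _ _) (Real.sqrt_nonneg _)
      · calc Real.sqrt (b k) * ‖r (k+1) z‖
            ≤ Real.sqrt (b (k+2)) * ‖r (k+1) z‖ :=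
              mul_le_mul_of_nonneg_right hb0 (norm_nonneg _)
          _ ≤ Real.sqrt (b (k+2)) * max (‖r (k+1) z‖) (‖r (k+2) z‖) :=
              mul_le_mul_of_nonneg_left (le_max_left _ _) (Real.sqrt_nonneg _)
    rcases hcase with hm1 | hm1
    · -- concave case : mf k ≤ 1 for k ≥ n1
      refine ⟨Wf n1 / P, div_pos (hWfpos n1) hPpos, ?_⟩
      intro k hk
      have hiter := berez_prod_iter Wf (fun k => max 1 (mf k) * (1 + sf k)) hMnn hstep n1 k hk
      have heqprod : (∏ j ∈ Finset.Ico n1 k, (max 1 (mf j) * (1 + sf j))) =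
          ∏ j ∈ Finset.Ico n1 k, (1 + sf j) := by
        apply Finset.prod_congr rfl
        intro j hj
        have hj1 := (Finset.mem_Ico.mp hj).1
        have : mf j ≤ 1 := by
          rw [hmfd]
          exact (div_le_one (hb (j+1))).mpr (hm1 j hj1)
        rw [max_eq_left this, one_mul]
      rw [heqprod] at hiter
      have h1 : Wf n1 ≤ P * Wf k :=
        le_trans hiter (mul_le_mul_of_nonneg_right (hprodS n1 k) (hWfpos k).le)
      rw [div_le_iff₀ hPpos]
      calc Wf n1 ≤ P * Wf k := h1
        _ ≤ P * (Real.sqrt (b (k+2)) * max (‖r (k+1) z‖) (‖r (k+2) z‖)) :=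
            mul_le_mul_of_nonneg_left (hWle k hk) hPpos.le
        _ = Real.sqrt (b (k+2)) * max (‖r (k+1) z‖) (‖r (k+2) z‖) * P :=
            by ring
    · -- convex case : 1 ≤ mf k for k ≥ n1
      refine ⟨Wf n1 * Real.sqrt (b (n1+1)) / (P * Real.sqrt (b n1)),
        div_pos (mul_pos (hWfpos n1) (Real.sqrt_pos.2 (hb (n1+1))))
          (mul_pos hPpos (Real.sqrt_pos.2 (hb n1))), ?_⟩
      intro k hk
      have hiter := berez_prod_iter Wf (fun k => max 1 (mf k) * (1 + sf k)) hMnn hstep n1 k hk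
      have heqprod : (∏ j ∈ Finset.Ico n1 k, (max 1 (mf j) * (1 + sf j))) =
          (∏ j ∈ Finset.Ico n1 k, (1 + sf j)) * (∏ j ∈ Finset.Ico n1 k, mf j) := by
        rw [← Finset.prod_mul_distrib]
        apply Finset.prod_congr rfl
        intro j hj
        have hj1 := (Finset.mem_Ico.mp hj).1
        have : (1:ℝ) ≤ mf j := by
          rw [hmfd]
          exact (one_le_div (hb (j+1))).mpr (hm1 j hj1)
        rw [max_eq_right this, mul_comm]
      rw [heqprod] at hiter
      have htel : (∏ j ∈ Finset.Ico n1 k, mf j) * (Real.sqrt (b (n1+1)) * Real.sqrt (b k)) =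
          Real.sqrt (b n1) * Real.sqrt (b (k+1)) := by
        simp only [hmfd]
        exact berez_prod_m b hb n1 k hk
      have hprodnn : (0:ℝ) ≤ ∏ j ∈ Finset.Ico n1 k, (1 + sf j) :=
        Finset.prod_nonneg (fun j _ => by linarith [hsnn j])
      have hkey : Wf n1 * Real.sqrt (b (n1+1)) * Real.sqrt (b k) ≤
          P * Wf k * (Real.sqrt (b n1) * Real.sqrt (b (k+1))) := by
        calc Wf n1 * Real.sqrt (b (n1+1)) * Real.sqrt (b k)
            ≤ ((∏ j ∈ Finset.Ico n1 k, (1 + sf j)) * (∏ j ∈ Finset.Ico n1 k, mf j) * Wf k) *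
              (Real.sqrt (b (n1+1)) * Real.sqrt (b k)) := by
              rw [← mul_assoc]
              exact mul_le_mul_of_nonneg_right
                (mul_le_mul_of_nonneg_right hiter (Real.sqrt_nonneg _)) (Real.sqrt_nonneg _)
          _ = ((∏ j ∈ Finset.Ico n1 k, (1 + sf j)) * Wf k) *
              ((∏ j ∈ Finset.Ico n1 k, mf j) * (Real.sqrt (b (n1+1)) * Real.sqrt (b k))) := by
              ring
          _ = ((∏ j ∈ Finset.Ico n1 k, (1 + sf j)) * Wf k) *
              (Real.sqrt (b n1) * Real.sqrt (b (k+1))) := by rw [htel]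
          _ ≤ (P * Wf k) * (Real.sqrt (b n1) * Real.sqrt (b (k+1))) := by
              apply mul_le_mul_of_nonneg_right _ (by positivity)
              exact mul_le_mul_of_nonneg_right (hprodS n1 k) (hWfpos k).le
      -- now combine with hWle-type bound and convexity at k
      have hmk : b (k+1) ≤ Real.sqrt (b k) * Real.sqrt (b (k+2)) := by
        rw [← Real.sqrt_mul (hb k).le]
        exact hm1 k hk
      set T := Real.sqrt (b (k+2)) * max (‖r (k+1) z‖) (‖r (k+2) z‖) with hTd
      have hTnn : 0 ≤ T := by
        rw [hTd]
        positivity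
      have claim1 : Wf k * Real.sqrt (b (k+2)) ≤ T * Real.sqrt (b (k+1)) := by
        rw [hWfd, hTd]
        simp only []
        rw [max_mul_of_nonneg _ _ (Real.sqrt_nonneg (b (k+2)))]
        apply max_le
        · calc Real.sqrt (b (k+1)) * ‖r (k+2) z‖ * Real.sqrt (b (k+2))
              = (Real.sqrt (b (k+1)) * Real.sqrt (b (k+2))) * ‖r (k+2) z‖ := by ring
            _ ≤ (Real.sqrt (b (k+1)) * Real.sqrt (b (k+2))) *
                max (‖r (k+1) z‖) (‖r (k+2) z‖) :=
                mul_le_mul_of_nonneg_left (le_max_right _ _) (by positivity)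
            _ = Real.sqrt (b (k+2)) * max (‖r (k+1) z‖) (‖r (k+2) z‖) *
                Real.sqrt (b (k+1)) := by ring
        · have hb0 : Real.sqrt (b k) ≤ Real.sqrt (b (k+1)) := Real.sqrt_le_sqrt (hmon k hk)
          calc Real.sqrt (b k) * ‖r (k+1) z‖ * Real.sqrt (b (k+2))
              = Real.sqrt (b k) * (Real.sqrt (b (k+2)) * ‖r (k+1) z‖) := by ring
            _ ≤ Real.sqrt (b (k+1)) * (Real.sqrt (b (k+2)) *
                max (‖r (k+1) z‖) (‖r (k+2) z‖)) := by
                apply mul_le_mul hb0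
                · exact mul_le_mul_of_nonneg_left (le_max_left _ _) (Real.sqrt_nonneg _)
                · positivity
                · exact Real.sqrt_nonneg _
            _ = Real.sqrt (b (k+2)) * max (‖r (k+1) z‖) (‖r (k+2) z‖) *
                Real.sqrt (b (k+1)) := by ring
      have hchain : Wf n1 * Real.sqrt (b (n1+1)) * b (k+1) ≤
          P * Real.sqrt (b n1) * T * b (k+1) := by
        calc Wf n1 * Real.sqrt (b (n1+1)) * b (k+1)
            ≤ Wf n1 * Real.sqrt (b (n1+1)) * (Real.sqrt (b k) * Real.sqrt (b (k+2))) := by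
              apply mul_le_mul_of_nonneg_left hmk
              positivity
          _ = (Wf n1 * Real.sqrt (b (n1+1)) * Real.sqrt (b k)) * Real.sqrt (b (k+2)) := by ring
          _ ≤ (P * Wf k * (Real.sqrt (b n1) * Real.sqrt (b (k+1)))) * Real.sqrt (b (k+2)) :=
              mul_le_mul_of_nonneg_right hkey (Real.sqrt_nonneg _)
          _ = (P * Real.sqrt (b n1) * Real.sqrt (b (k+1))) * (Wf k * Real.sqrt (b (k+2))) := by
              ring
          _ ≤ (P * Real.sqrt (b n1) * Real.sqrt (b (k+1))) * (T * Real.sqrt (b (k+1))) := by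
              apply mul_le_mul_of_nonneg_left claim1
              positivity
          _ = P * Real.sqrt (b n1) * T * (Real.sqrt (b (k+1)) * Real.sqrt (b (k+1))) := by ring
          _ = P * Real.sqrt (b n1) * T * b (k+1) := by
              rw [Real.mul_self_sqrt (hb (k+1)).le]
      have h4 : Wf n1 * Real.sqrt (b (n1+1)) ≤ P * Real.sqrt (b n1) * T :=
        le_of_mul_le_mul_right hchain (hb (k+1))
      rw [div_le_iff₀ (mul_pos hPpos (Real.sqrt_pos.2 (hb n1)))]
      calc Wf n1 * Real.sqrt (b (n1+1)) ≤ P * Real.sqrt (b n1) * T := h4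
        _ = T * (P * Real.sqrt (b n1)) := by ring
  -- finite prefix bound
  obtain ⟨K0, hK0pos, hK0⟩ := exists_pos_lb
    (fun n => Real.sqrt (b (n+1)) * max (‖r n z‖) (‖r (n+1) z‖))
    (fun n => mul_pos (Real.sqrt_pos.2 (hb (n+1))) (hmaxpos n)) n1
  refine ⟨min κ K0, lt_min hκpos hK0pos, ?_⟩
  intro n
  rw [div_le_iff₀ (Real.sqrt_pos.2 (hb (n+1)))]
  rcases le_or_gt n n1 with hn | hn
  · calc min κ K0 ≤ K0 := min_le_right _ _
      _ ≤ Real.sqrt (b (n+1)) * max (‖r n z‖) (‖r (n+1) z‖) := hK0 n hn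
      _ = max (‖r n z‖) (‖r (n+1) z‖) * Real.sqrt (b (n+1)) := by ring
  · obtain ⟨k, rfl⟩ : ∃ k, n = k + 1 := ⟨n - 1, by omega⟩
    have hk : n1 ≤ k := by omega
    calc min κ K0 ≤ κ := min_le_left _ _
      _ ≤ Real.sqrt (b (k+2)) * max (‖r (k+1) z‖) (‖r (k+2) z‖) := hκ k hk
      _ = max (‖r (k+1) z‖) (‖r (k+1+1) z‖) * Real.sqrt (b (k+1+1)) := by
          ring_nf
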